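/- arXiv:2407.05043 — 5 statements merged into one kernel-verified Lean document; each statement's English description precedes it below -/
import Mathlib

section
/- Let (K,σ) ⊆ (M,σ) ⊆ (L,σ) be a tower of difference field extensions. If K ⊆ M and M ⊆ L are both σ-separable, then K ⊆ L is σ-separable. Moreover, if K ⊆ L is σ-separable, then K ⊆ M is σ-separable. -/
/-!
STATEMENT 5: Let (K,σ) ⊆ (M,σ) ⊆ (L,σ) be a tower of difference fields.
If K ⊆ M and M ⊆ L are σ-separable, then so is K ⊆ L; and if K ⊆ L is
σ-separable then so is K ⊆ M.

σ-separability of K ⊆ L means: K is linearly disjoint from σ(L) over σ(K),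
inside L.  We work with σ-stable subfields of an ambient field Ω = L.
-/

/-- A and B are linearly disjoint over C (inside the ambient field Ω). -/
def LinDisj {Ω : Type*} [Field Ω] (C A B : Set Ω) : Prop :=
  ∀ (n : ℕ) (a : Fin n → Ω), (∀ i, a i ∈ A) →
    (∀ c : Fin n → Ω, (∀ i, c i ∈ C) → (∑ i, c i * a i) = 0 → ∀ i, c i = 0) →
    (∀ c : Fin n → Ω, (∀ i, c i ∈ B) → (∑ i, c i * a i) = 0 → ∀ i, c i = 0)

/-- (K,σ) ⊆ (M,σ) is σ-separable: K is linearly disjoint from σ(M) over σ(K). -/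
def SigmaSeparable {Ω : Type*} [Field Ω] (σ : Ω →+* Ω) (K M : Subfield Ω) : Prop :=
  LinDisj (σ '' (K : Set Ω)) (K : Set Ω) (σ '' (M : Set Ω))

theorem sigmaSeparable_tower {Ω : Type*} [Field Ω] (σ : Ω →+* Ω)
    (K M : Subfield Ω) (hKM : K ≤ M) (hMT : M ≤ (⊤ : Subfield Ω))
    (hK : ∀ x ∈ K, σ x ∈ K) (hM : ∀ x ∈ M, σ x ∈ M) :
    ((SigmaSeparable σ K M ∧ SigmaSeparable σ M ⊤) → SigmaSeparable σ K ⊤) ∧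
    (SigmaSeparable σ K ⊤ → SigmaSeparable σ K M) := by
  constructor
  · rintro ⟨h1, h2⟩ n a haK hind c hc hsum i
    exact h2 n a (fun i => hKM (haK i)) (h1 n a haK hind) c hc hsum i
  · intro h n a haK hind c hcM hsum i
    refine h n a haK hind c (fun i => ?_) hsum i
    obtain ⟨x, -, hx⟩ := hcM i
    exact ⟨x, trivial, hx⟩
end

section
/- Let (K,v,σ) be a valued difference field. Define the FE-closure of K as K_FE := K^alg ∩ K_inv (the relative algebraic closure of K in its inversive closure, with the induced valuation and endomorphism). Then σ(K_FE) is relatively algebraically closed in K_FE, and for any valued difference field extension (L,v,σ) of (K,v,σ) in which σ(L) is relatively algebraically closed in L, there is a unique valued difference field embedding K_FE → L over K. -/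
open Polynomial

private lemma subfield_alg_mono {Ω : Type*} [Field Ω] {F F' : Subfield Ω} (h : F ≤ F')
    {x : Ω} (hx : IsAlgebraic F x) : IsAlgebraic F' x := by
  obtain ⟨p, hp0, hp⟩ := hx
  refine ⟨p.map (Subfield.inclusion h), (Polynomial.map_ne_zero_iff
    (Subfield.inclusion h).injective).2 hp0, ?_⟩
  have hc : (algebraMap F' Ω).comp (Subfield.inclusion h) = algebraMap F Ω :=
    RingHom.ext fun c => rfl
  rw [aeval_def, eval₂_map, hc, ← aeval_def, hp]

private lemma subfield_alg_map_iff {Ω Ω' : Type*} [Field Ω] [Field Ω'] (φ : Ω →+* Ω')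
    (F : Subfield Ω) (x : Ω) :
    IsAlgebraic F x ↔ IsAlgebraic (F.map φ) (φ x) := by
  set ψ : F →+* F.map φ :=
    RingHom.codRestrict (φ.comp (algebraMap F Ω)) (F.map φ)
      (fun c => ⟨(c : Ω), c.2, rfl⟩) with hψdef
  have hcomm : (algebraMap (F.map φ) Ω').comp ψ = φ.comp (algebraMap F Ω) :=
    RingHom.ext fun c => rfl
  constructor
  · rintro ⟨p, hp0, hp⟩
    refine ⟨p.map ψ, (Polynomial.map_ne_zero_iff ψ.injective).2 hp0, ?_⟩
    rw [aeval_def, eval₂_map, hcomm, ← Polynomial.hom_eval₂, ← aeval_def, hp, map_zero]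
  · rintro ⟨q, hq0, hq⟩
    have hsurjψ : Function.Surjective ψ := by
      rintro ⟨d, c, hc, rfl⟩
      exact ⟨⟨c, hc⟩, rfl⟩
    set e : F ≃+* F.map φ := RingEquiv.ofBijective ψ ⟨ψ.injective, hsurjψ⟩ with hedef
    refine ⟨q.map (e.symm : F.map φ →+* F),
      (Polynomial.map_ne_zero_iff (e.symm : F.map φ →+* F).injective).2 hq0, ?_⟩
    have key : φ.comp ((algebraMap F Ω).comp (e.symm : F.map φ →+* F)) =
        algebraMap (F.map φ) Ω' := by
      refine RingHom.ext fun d => ?_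
      have h1 : ψ (e.symm d) = d := e.apply_symm_apply d
      have h2 : ((ψ (e.symm d) : F.map φ) : Ω') = φ ((e.symm d : F) : Ω) := rfl
      rw [h1] at h2
      exact h2.symm
    apply φ.injective
    rw [map_zero, aeval_def, eval₂_map, Polynomial.hom_eval₂, key, ← aeval_def, hq]

private lemma subfield_alg_trans {Ω : Type*} [Field Ω] {F E : Subfield Ω} (hle : F ≤ E)
    (hE : ∀ c : E, IsAlgebraic F (c : Ω)) {x : Ω} (hx : IsAlgebraic E x) :
    IsAlgebraic F x := by
  letI : Algebra F E := (Subfield.inclusion hle).toAlgebra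
  haveI : IsScalarTower F E Ω := IsScalarTower.of_algebraMap_eq (fun c => rfl)
  haveI : Algebra.IsIntegral F E := by
    constructor
    intro c
    have h1 : IsIntegral F ((c : Ω)) := isAlgebraic_iff_isIntegral.1 (hE c)
    have h2 : Function.Injective (IsScalarTower.toAlgHom F E Ω) :=
      Subtype.coe_injective
    exact (isIntegral_algHom_iff (IsScalarTower.toAlgHom F E Ω) h2).1 h1
  exact isAlgebraic_iff_isIntegral.2
    (isIntegral_trans x (isAlgebraic_iff_isIntegral.1 hx))

theorem FE_closure_universal_property
    {Ω Γ₀ : Type*} [Field Ω] [CharZero Ω] [LinearOrderedCommGroupWithZero Γ₀]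
    (v : Valuation Ω Γ₀) (σ : Ω →+* Ω) (K : Subfield Ω)
    (hσK : ∀ x ∈ K, σ x ∈ K)
    (hσv : ∀ x y : Ω, v x ≤ v y ↔ v (σ x) ≤ v (σ y))
    (hsurj : Function.Surjective σ)
    (hinv : ∀ x : Ω, ∃ n : ℕ, (σ : Ω → Ω)^[n] x ∈ K)
    -- the FE-closure: the relative algebraic closure of K in Ω = K_inv
    (KFE : Subfield Ω) (hKFE : (KFE : Set Ω) = {x : Ω | IsAlgebraic K x}) :
    -- (a) σ(K_FE) is relatively algebraically closed in K_FE
    (∀ x ∈ KFE, IsAlgebraic (Subfield.closure (σ '' (KFE : Set Ω))) x →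
        x ∈ σ '' (KFE : Set Ω)) ∧
    -- (b) universal property
    (∀ (L : Type*) (Δ : Type*), ∀ (_ : Field L) (_ : CharZero L)
        (_ : LinearOrderedCommGroupWithZero Δ),
      ∀ (w : Valuation L Δ) (τ : L →+* L) (f : K →+* L),
        -- f is a valued difference field embedding of K into L
        (∀ x y : K, v (x : Ω) ≤ v (y : Ω) ↔ w (f x) ≤ w (f y)) →
        (∀ x : K, f ⟨σ (x : Ω), hσK _ x.2⟩ = τ (f x)) →
        (∀ y z : L, w y ≤ w z ↔ w (τ y) ≤ w (τ z)) →
        -- L is a model of FE: τ(L) is relatively algebraically closed in L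
        (∀ y : L, IsAlgebraic τ.fieldRange y → y ∈ τ.fieldRange) →
        -- unique embedding of K_FE into L over K, as valued difference fields
        ∃! g : KFE →+* L,
          (∀ x : K, g ⟨(x : Ω), by
              rw [show ((x : Ω) ∈ KFE) = ((x : Ω) ∈ (KFE : Set Ω)) from rfl, hKFE]
              exact (isAlgebraic_algebraMap x)⟩ = f x) ∧
          (∀ z z' : KFE, v (z : Ω) ≤ v (z' : Ω) ↔ w (g z) ≤ w (g z')) ∧
          (∀ z : KFE, ∀ hz : σ (z : Ω) ∈ KFE, g ⟨σ (z : Ω), hz⟩ = τ (g z))) := by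
  -- basic membership characterisation
  have hmem_iff : ∀ x : Ω, x ∈ KFE ↔ IsAlgebraic K x := fun x => by
    rw [← SetLike.mem_coe, hKFE]; exact Iff.rfl
  have hKle : K ≤ KFE := fun u hu =>
    (hmem_iff u).2 (isAlgebraic_algebraMap (⟨u, hu⟩ : K))
  have hKmaple : K.map σ ≤ K := by
    rintro y ⟨c, hc, rfl⟩; exact hσK c hc
  have hKFEσ : ∀ x ∈ KFE, σ x ∈ KFE := by
    intro x hx
    rw [hmem_iff] at hx ⊢
    exact subfield_alg_mono hKmaple ((subfield_alg_map_iff σ K x).1 hx)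
  have hKiter : ∀ (n : ℕ) (x : Ω), x ∈ K → (⇑σ)^[n] x ∈ K := by
    intro n
    induction n with
    | zero => exact fun x hx => hx
    | succ n ih =>
      intro x hx
      rw [Function.iterate_succ_apply]
      exact ih _ (hσK x hx)
  have hmemle : ∀ (z : Ω) (n m : ℕ), n ≤ m → (⇑σ)^[n] z ∈ K → (⇑σ)^[m] z ∈ K := by
    intro z n m hnm hn
    have : (⇑σ)^[m - n + n] z = (⇑σ)^[m - n] ((⇑σ)^[n] z) :=
      Function.iterate_add_apply _ _ _ _
    rw [Nat.sub_add_cancel hnm] at this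
    rw [this]
    exact hKiter _ _ hn
  have hKFEiter : ∀ (n : ℕ) (x : Ω), x ∈ KFE → (⇑σ)^[n] x ∈ KFE := by
    intro n
    induction n with
    | zero => exact fun x hx => hx
    | succ n ih =>
      intro x hx
      rw [Function.iterate_succ_apply]
      exact ih _ (hKFEσ x hx)
  constructor
  · -- part (a)
    intro x hx halg
    have hcl : Subfield.closure (σ '' (KFE : Set Ω)) = KFE.map σ := by
      rw [← Subfield.coe_map, Subfield.closure_eq]
    rw [hcl] at halg
    obtain ⟨y, rfl⟩ := hsurj x
    have hyKFE : IsAlgebraic KFE y := (subfield_alg_map_iff σ KFE y).2 halg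
    have hyK : IsAlgebraic K y :=
      subfield_alg_trans hKle (fun c => (hmem_iff _).1 c.2) hyKFE
    exact ⟨y, (hmem_iff y).2 hyK, rfl⟩
  · -- part (b)
    intro L Δ _ _ _ w τ f hf hfτ hτw hFE
    have hτinj : Function.Injective τ := τ.injective
    have hτiter_inj : ∀ m : ℕ, Function.Injective ((⇑τ)^[m]) :=
      fun m => Function.Injective.iterate hτinj m
    -- f commutes with iterates
    have hcomm : ∀ (n : ℕ) (u : Ω) (hu : u ∈ K),
        f ⟨(⇑σ)^[n] u, hKiter n u hu⟩ = (⇑τ)^[n] (f ⟨u, hu⟩) := by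
      intro n
      induction n with
      | zero => exact fun u hu => rfl
      | succ n ih =>
        intro u hu
        calc f ⟨(⇑σ)^[n + 1] u, hKiter (n + 1) u hu⟩
            = f ⟨(⇑σ)^[n] (σ u), hKiter n (σ u) (hσK u hu)⟩ := by
              exact congrArg f (Subtype.ext (Function.iterate_succ_apply _ _ _))
          _ = (⇑τ)^[n] (f ⟨σ u, hσK u hu⟩) := ih (σ u) (hσK u hu)
          _ = (⇑τ)^[n] (τ (f ⟨u, hu⟩)) := congrArg ((⇑τ)^[n]) (hfτ ⟨u, hu⟩)
          _ = (⇑τ)^[n + 1] (f ⟨u, hu⟩) := (Function.iterate_succ_apply _ _ _).symm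
    -- tower of field ranges of τ
    set Fn : ℕ → Subfield L := fun n => (τ ^ n : L →+* L).fieldRange with hFndef
    have hFnsucc : ∀ n : ℕ, Fn (n + 1) = (Fn n).map τ := by
      intro n
      rw [hFndef]
      simp only
      rw [RingHom.map_fieldRange]
      congr 1
      rw [pow_succ']
      rfl
    have hFE_n : ∀ (n : ℕ) (y : L), IsAlgebraic (Fn n) y → y ∈ Fn n := by
      intro n
      induction n with
      | zero => exact fun y _ => ⟨y, rfl⟩
      | succ n ih =>
        intro y hy
        rw [hFnsucc n] at hy
        have h1 : (Fn n).map τ ≤ τ.fieldRange := by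
          rintro u ⟨c, _, rfl⟩; exact ⟨c, rfl⟩
        obtain ⟨u, rfl⟩ := RingHom.mem_fieldRange.1 (hFE y (subfield_alg_mono h1 hy))
        have h2 : IsAlgebraic (Fn n) u := (subfield_alg_map_iff τ (Fn n) u).2 hy
        rw [hFnsucc n]
        exact ⟨u, ih u h2, rfl⟩
    -- the image of σ^[n] z under f is algebraic over Fn n
    have hfalg : ∀ (n : ℕ) (z : Ω), IsAlgebraic K z → ∀ hz : (⇑σ)^[n] z ∈ K,
        IsAlgebraic (Fn n) (f ⟨(⇑σ)^[n] z, hz⟩) := by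
      intro n z hzalg hz
      obtain ⟨p, hp0, hp⟩ := hzalg
      set θ : K →+* K :=
        RingHom.codRestrict ((σ ^ n : Ω →+* Ω).comp (algebraMap K Ω)) K
          (fun c => hKiter n (c : Ω) c.2) with hθdef
      set ψ : K →+* Fn n :=
        RingHom.codRestrict (f.comp θ) (Fn n)
          (fun c => by
            have : f (θ c) = (⇑τ)^[n] (f c) := hcomm n (c : Ω) c.2
            exact ⟨f c, this.symm⟩) with hψdef
      refine ⟨p.map ψ, (Polynomial.map_ne_zero_iff ψ.injective).2 hp0, ?_⟩
      have hsub : eval₂ θ (⟨(⇑σ)^[n] z, hz⟩ : K) p = 0 := by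
        apply Subtype.coe_injective
        have e2 := Polynomial.hom_eval₂ p (algebraMap K Ω) (σ ^ n : Ω →+* Ω) z
        have e1 : (σ ^ n : Ω →+* Ω) (Polynomial.eval₂ (algebraMap K Ω) z p) = 0 := by
          rw [← aeval_def, hp, map_zero]
        have e3 := Polynomial.hom_eval₂ p θ (algebraMap K Ω)
          (⟨(⇑σ)^[n] z, hz⟩ : K)
        have e4 : (algebraMap K Ω).comp θ = (σ ^ n : Ω →+* Ω).comp (algebraMap K Ω) :=
          RingHom.ext fun c => rfl
        rw [e4] at e3
        have e5 : (algebraMap K Ω) (⟨(⇑σ)^[n] z, hz⟩ : K) = (σ ^ n : Ω →+* Ω) z := rfl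
        rw [e5] at e3
        rw [← e2, e1] at e3
        exact e3.trans rfl
      rw [aeval_def, eval₂_map]
      have hc2 : (algebraMap (Fn n) L).comp ψ = f.comp θ := RingHom.ext fun c => rfl
      rw [hc2]
      have e6 := Polynomial.hom_eval₂ p θ f (⟨(⇑σ)^[n] z, hz⟩ : K)
      rw [hsub, map_zero] at e6
      exact e6.symm
    -- existence of preimages
    have hex : ∀ (z : Ω), IsAlgebraic K z → ∀ (n : ℕ) (hz : (⇑σ)^[n] z ∈ K),
        ∃ y : L, (⇑τ)^[n] y = f ⟨(⇑σ)^[n] z, hz⟩ := by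
      intro z hzalg n hz
      obtain ⟨y, hy⟩ := RingHom.mem_fieldRange.1 (hFE_n n _ (hfalg n z hzalg hz))
      exact ⟨y, hy⟩
    have halgz : ∀ z : KFE, IsAlgebraic K (z : Ω) := fun z => (hmem_iff _).1 z.2
    -- the underlying function of the embedding
    set g₀ : KFE → L := fun z =>
      (hex (z : Ω) (halgz z) (hinv (z : Ω)).choose (hinv (z : Ω)).choose_spec).choose
      with hg₀def
    have hbase : ∀ z : KFE, (⇑τ)^[(hinv (z : Ω)).choose] (g₀ z) =
        f ⟨(⇑σ)^[(hinv (z : Ω)).choose] (z : Ω), (hinv (z : Ω)).choose_spec⟩ :=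
      fun z => (hex (z : Ω) (halgz z) (hinv (z : Ω)).choose
        (hinv (z : Ω)).choose_spec).choose_spec
    -- the characterising property of g₀
    have gchar : ∀ (z : KFE) (m : ℕ) (hm : (⇑σ)^[m] (z : Ω) ∈ K),
        (⇑τ)^[m] (g₀ z) = f ⟨(⇑σ)^[m] (z : Ω), hm⟩ := by
      intro z m hm
      set n := (hinv (z : Ω)).choose with hndef
      have hn : (⇑σ)^[n] (z : Ω) ∈ K := (hinv (z : Ω)).choose_spec
      apply hτiter_inj n
      calc (⇑τ)^[n] ((⇑τ)^[m] (g₀ z))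
          = (⇑τ)^[m] ((⇑τ)^[n] (g₀ z)) := by
            rw [← Function.iterate_add_apply, ← Function.iterate_add_apply, add_comm]
        _ = (⇑τ)^[m] (f ⟨(⇑σ)^[n] (z : Ω), hn⟩) := congrArg _ (hbase z)
        _ = f ⟨(⇑σ)^[m] ((⇑σ)^[n] (z : Ω)), hKiter m _ hn⟩ := (hcomm m _ hn).symm
        _ = f ⟨(⇑σ)^[n] ((⇑σ)^[m] (z : Ω)), hKiter n _ hm⟩ := by
            refine congrArg f (Subtype.ext ?_)
            show (⇑σ)^[m] ((⇑σ)^[n] (z : Ω)) = (⇑σ)^[n] ((⇑σ)^[m] (z : Ω))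
            rw [← Function.iterate_add_apply, ← Function.iterate_add_apply, add_comm]
        _ = (⇑τ)^[n] (f ⟨(⇑σ)^[m] (z : Ω), hm⟩) := hcomm n _ hm
    -- g₀ is a ring homomorphism
    have hmap_one : g₀ 1 = 1 := by
      have h0 : (⇑σ)^[0] ((1 : KFE) : Ω) ∈ K := K.one_mem
      have := gchar 1 0 h0
      rw [show (⟨(⇑σ)^[0] ((1 : KFE) : Ω), h0⟩ : K) = 1 from Subtype.ext (by simp),
        map_one] at this
      exact this
    have hmap_zero : g₀ 0 = 0 := by
      have h0 : (⇑σ)^[0] ((0 : KFE) : Ω) ∈ K := K.zero_mem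
      have := gchar 0 0 h0
      rw [show (⟨(⇑σ)^[0] ((0 : KFE) : Ω), h0⟩ : K) = 0 from Subtype.ext (by simp),
        map_zero] at this
      exact this
    have hmap_mul : ∀ z z' : KFE, g₀ (z * z') = g₀ z * g₀ z' := by
      intro z z'
      set m := max (max (hinv (z : Ω)).choose (hinv (z' : Ω)).choose)
        (hinv ((z * z' : KFE) : Ω)).choose with hmdef
      have hz : (⇑σ)^[m] (z : Ω) ∈ K :=
        hmemle _ _ _ (le_max_of_le_left (le_max_left _ _)) (hinv (z : Ω)).choose_spec
      have hz' : (⇑σ)^[m] (z' : Ω) ∈ K :=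
        hmemle _ _ _ (le_max_of_le_left (le_max_right _ _)) (hinv (z' : Ω)).choose_spec
      have hzz' : (⇑σ)^[m] ((z * z' : KFE) : Ω) ∈ K :=
        hmemle _ _ _ (le_max_right _ _) (hinv ((z * z' : KFE) : Ω)).choose_spec
      apply hτiter_inj m
      rw [iterate_map_mul, gchar z m hz, gchar z' m hz', gchar (z * z') m hzz',
        ← map_mul]
      refine congrArg f (Subtype.ext ?_)
      show (⇑σ)^[m] ((z * z' : KFE) : Ω) = (⇑σ)^[m] (z : Ω) * (⇑σ)^[m] (z' : Ω)
      rw [show ((z * z' : KFE) : Ω) = (z : Ω) * (z' : Ω) from rfl,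
        iterate_map_mul]
    have hmap_add : ∀ z z' : KFE, g₀ (z + z') = g₀ z + g₀ z' := by
      intro z z'
      set m := max (max (hinv (z : Ω)).choose (hinv (z' : Ω)).choose)
        (hinv ((z + z' : KFE) : Ω)).choose with hmdef
      have hz : (⇑σ)^[m] (z : Ω) ∈ K :=
        hmemle _ _ _ (le_max_of_le_left (le_max_left _ _)) (hinv (z : Ω)).choose_spec
      have hz' : (⇑σ)^[m] (z' : Ω) ∈ K :=
        hmemle _ _ _ (le_max_of_le_left (le_max_right _ _)) (hinv (z' : Ω)).choose_spec
      have hzz' : (⇑σ)^[m] ((z + z' : KFE) : Ω) ∈ K :=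
        hmemle _ _ _ (le_max_right _ _) (hinv ((z + z' : KFE) : Ω)).choose_spec
      apply hτiter_inj m
      rw [iterate_map_add, gchar z m hz, gchar z' m hz', gchar (z + z') m hzz',
        ← map_add]
      refine congrArg f (Subtype.ext ?_)
      show (⇑σ)^[m] ((z + z' : KFE) : Ω) = (⇑σ)^[m] (z : Ω) + (⇑σ)^[m] (z' : Ω)
      rw [show ((z + z' : KFE) : Ω) = (z : Ω) + (z' : Ω) from rfl,
        iterate_map_add]
    set g : KFE →+* L :=
      { toFun := g₀
        map_one' := hmap_one
        map_mul' := hmap_mul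
        map_zero' := hmap_zero
        map_add' := hmap_add } with hgdef
    have hgapp : ∀ z : KFE, g z = g₀ z := fun z => rfl
    -- property 1
    have hprop1 : ∀ x : K, g ⟨(x : Ω), (hmem_iff _).2 (isAlgebraic_algebraMap x)⟩ = f x :=
      fun x => gchar ⟨(x : Ω), (hmem_iff _).2 (isAlgebraic_algebraMap x)⟩ 0 x.2
    -- iterated valuation compatibility
    have hviter : ∀ (m : ℕ) (x y : Ω),
        v x ≤ v y ↔ v ((⇑σ)^[m] x) ≤ v ((⇑σ)^[m] y) := by
      intro m
      induction m with
      | zero => exact fun x y => Iff.rfl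
      | succ m ih =>
        intro x y
        rw [Function.iterate_succ_apply', Function.iterate_succ_apply']
        exact (ih x y).trans (hσv _ _)
    have hwiter : ∀ (m : ℕ) (x y : L),
        w x ≤ w y ↔ w ((⇑τ)^[m] x) ≤ w ((⇑τ)^[m] y) := by
      intro m
      induction m with
      | zero => exact fun x y => Iff.rfl
      | succ m ih =>
        intro x y
        rw [Function.iterate_succ_apply', Function.iterate_succ_apply']
        exact (ih x y).trans (hτw _ _)
    have hprop2 : ∀ z z' : KFE, v (z : Ω) ≤ v (z' : Ω) ↔ w (g z) ≤ w (g z') := by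
      intro z z'
      set m := max (hinv (z : Ω)).choose (hinv (z' : Ω)).choose with hmdef
      have hz : (⇑σ)^[m] (z : Ω) ∈ K :=
        hmemle _ _ _ (le_max_left _ _) (hinv (z : Ω)).choose_spec
      have hz' : (⇑σ)^[m] (z' : Ω) ∈ K :=
        hmemle _ _ _ (le_max_right _ _) (hinv (z' : Ω)).choose_spec
      rw [hviter m]
      rw [hf ⟨_, hz⟩ ⟨_, hz'⟩]
      rw [← gchar z m hz, ← gchar z' m hz']
      exact (hwiter m _ _).symm
    have hprop3 : ∀ z : KFE, ∀ hz : σ (z : Ω) ∈ KFE, g ⟨σ (z : Ω), hz⟩ = τ (g z) := by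
      intro z hz
      set n := (hinv (z : Ω)).choose with hndef
      have hn : (⇑σ)^[n] (z : Ω) ∈ K := (hinv (z : Ω)).choose_spec
      have hn1 : (⇑σ)^[n] ((⟨σ (z : Ω), hz⟩ : KFE) : Ω) ∈ K := by
        show (⇑σ)^[n] (σ (z : Ω)) ∈ K
        rw [← Function.iterate_succ_apply]
        exact hmemle _ _ _ (Nat.le_succ n) hn
      have hn2 : (⇑σ)^[n + 1] (z : Ω) ∈ K := hmemle _ _ _ (Nat.le_succ n) hn
      apply hτiter_inj n
      rw [hgapp, gchar ⟨σ (z : Ω), hz⟩ n hn1]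
      have h2 := gchar z (n + 1) hn2
      have h4 : (⇑τ)^[n] (τ (g₀ z)) = f ⟨(⇑σ)^[n] (σ (z : Ω)), hn1⟩ := by
        rw [← Function.iterate_succ_apply, h2]
        exact congrArg f (Subtype.ext (Function.iterate_succ_apply _ _ _))
      exact h4.symm
    refine ⟨g, ⟨hprop1, hprop2, hprop3⟩, ?_⟩
    -- uniqueness
    rintro g' ⟨H1, H2, H3⟩
    refine RingHom.ext fun z => ?_
    have key : ∀ n : ℕ,
        (⇑τ)^[n] (g' z) = g' ⟨(⇑σ)^[n] (z : Ω), hKFEiter n (z : Ω) z.2⟩ := by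
      intro n
      induction n with
      | zero => rfl
      | succ n ih =>
        rw [Function.iterate_succ_apply', ih]
        have h3 := H3 ⟨(⇑σ)^[n] (z : Ω), hKFEiter n (z : Ω) z.2⟩
          (hKFEσ _ (hKFEiter n (z : Ω) z.2))
        rw [← h3]
        exact congrArg g' (Subtype.ext (Function.iterate_succ_apply' _ _ _).symm)
    set n := (hinv (z : Ω)).choose with hndef
    have hn : (⇑σ)^[n] (z : Ω) ∈ K := (hinv (z : Ω)).choose_spec
    apply hτiter_inj n
    rw [key n, hgapp z, gchar z n hn]
    exact H1 ⟨(⇑σ)^[n] (z : Ω), hn⟩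
end

section
/- Let (K,v,σ) be a valued difference field which is weakly σ-henselian. Then for any a ∈ O_K and any nonzero ε ∈ m_K, there exists b ∈ O_K such that σ(b) − εb − a = 0. -/
/-!
Basic notions for valued difference fields (K,v,σ), following the paper.

A difference polynomial p(X) = P(X, σ(X), …, σ^n(X)) is represented by a
multivariate polynomial `P : MvPolynomial (Fin (n+1)) K`; its evaluation at
`a` substitutes `σ^i(a)` for the i-th variable.  `diffDeriv J P` is the
Taylor coefficient p_J = (1/J!)·∂^J P (characteristic zero).  We use
Mathlib's multiplicative convention for valuations, so the additive
condition "v x > v y" of the paper becomes "v x < v y", and the additive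
pairing I(γ) = Σ iₖ σ_Γ^k(γ) becomes the product `idxVal`.
-/

open scoped Classical

/-- Evaluation of the difference polynomial with underlying polynomial `P`
at `a`: substitute `σ^i(a)` for the `i`-th variable. -/
noncomputable def diffEval {K : Type*} [Field K] (σ : K →+* K) {n : ℕ}
    (P : MvPolynomial (Fin (n + 1)) K) (a : K) : K :=
  MvPolynomial.eval (fun i : Fin (n + 1) => (σ : K → K)^[(i : ℕ)] a) P

/-- The Taylor coefficient p_J = (1/J!)·∂^J P of a difference polynomial
(characteristic zero). -/
noncomputable def diffDeriv {K : Type*} [Field K] [CharZero K] {n : ℕ}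
    (J : Fin (n + 1) →₀ ℕ) (P : MvPolynomial (Fin (n + 1)) K) :
    MvPolynomial (Fin (n + 1)) K :=
  (J.prod fun _ k => ((Nat.factorial k : K)))⁻¹ •
    ((List.ofFn fun i : Fin (n + 1) =>
        ((MvPolynomial.pderiv (R := K) i).toLinearMap ^ (J i))).prod P)

/-- The multiplicative rendering of the additive pairing
I(γ) = i₀·γ + i₁·σ_Γ(γ) + ⋯ + iₙ·σ_Γ^n(γ). -/
def idxVal {Γ₀ : Type*} [LinearOrderedCommGroupWithZero Γ₀] {n : ℕ}
    (sΓ : Γ₀ →*₀ Γ₀) (J : Fin (n + 1) →₀ ℕ) (γ : Γ₀) : Γ₀ :=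
  J.prod fun i k => ((sΓ : Γ₀ → Γ₀)^[(i : ℕ)] γ) ^ k

/-- `p` is in σ-henselian configuration at `a` with radius `γ`. -/
def InSigmaHenselianConfig {K Γ₀ : Type*} [Field K] [CharZero K]
    [LinearOrderedCommGroupWithZero Γ₀]
    (v : Valuation K Γ₀) (σ : K →+* K) (sΓ : Γ₀ →*₀ Γ₀) {n : ℕ}
    (P : MvPolynomial (Fin (n + 1)) K) (a : K) (γ : Γ₀) : Prop :=
  γ ≠ 0 ∧
  (∃ i : Fin (n + 1),
     v (diffEval σ P a)
       = v (diffEval σ (diffDeriv (Finsupp.single i 1) P) a) *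
           (sΓ : Γ₀ → Γ₀)^[(i : ℕ)] γ) ∧
  (∀ j : Fin (n + 1),
     v (diffEval σ (diffDeriv (Finsupp.single j 1) P) a) *
         (sΓ : Γ₀ → Γ₀)^[(j : ℕ)] γ ≤ v (diffEval σ P a)) ∧
  (∀ J L : Fin (n + 1) →₀ ℕ, J ≠ 0 → L ≠ 0 → diffDeriv J P ≠ 0 →
     v (diffEval σ (diffDeriv (J + L) P) a) * idxVal sΓ (J + L) γ
       < v (diffEval σ (diffDeriv J P) a) * idxVal sΓ J γ)

/-- Weak σ-henselianity: difference polynomials `p` with `p' ≠ 0` in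
σ-henselian configuration have roots at the prescribed distance. -/
def WeaklySigmaHenselian {K Γ₀ : Type*} [Field K] [CharZero K]
    [LinearOrderedCommGroupWithZero Γ₀]
    (v : Valuation K Γ₀) (σ : K →+* K) (sΓ : Γ₀ →*₀ Γ₀) : Prop :=
  ∀ (n : ℕ) (P : MvPolynomial (Fin (n + 1)) K) (a : K) (γ : Γ₀),
    MvPolynomial.pderiv (0 : Fin (n + 1)) P ≠ 0 →
    InSigmaHenselianConfig v σ sΓ P a γ →
    ∃ b : K, diffEval σ P b = 0 ∧ v (b - a) = γ

/-- Strong σ-henselianity: all difference polynomials in σ-henselian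
configuration have roots at the prescribed distance. -/
def StronglySigmaHenselian {K Γ₀ : Type*} [Field K] [CharZero K]
    [LinearOrderedCommGroupWithZero Γ₀]
    (v : Valuation K Γ₀) (σ : K →+* K) (sΓ : Γ₀ →*₀ Γ₀) : Prop :=
  ∀ (n : ℕ) (P : MvPolynomial (Fin (n + 1)) K) (a : K) (γ : Γ₀),
    InSigmaHenselianConfig v σ sΓ P a γ →
    ∃ b : K, diffEval σ P b = 0 ∧ v (b - a) = γ

/-- Residue characteristic zero (together with `CharZero K`,
equicharacteristic zero): nonzero integers are units of `O_K`. -/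
def ResidueCharZero {K Γ₀ : Type*} [Field K]
    [LinearOrderedCommGroupWithZero Γ₀] (v : Valuation K Γ₀) : Prop :=
  ∀ m : ℕ, 0 < m → v (m : K) = 1

/-!
STATEMENT 7: If (K,v,σ) is weakly σ-henselian (residue characteristic
zero, σ_res and σ_Γ surjective), then for any a ∈ O_K and nonzero
ε ∈ m_K there is b ∈ O_K with σ(b) − εb − a = 0.
-/


section AuxLinear

open MvPolynomial

variable {K : Type*} [Field K] [CharZero K]

/-- The difference polynomial σ(X) − εX − a. -/
noncomputable def Plin (ε a : K) : MvPolynomial (Fin 2) K :=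
  X 1 - C ε * X 0 - C a

lemma diffEval_Plin (σ : K →+* K) (ε a b : K) :
    diffEval σ (Plin ε a) b = σ b - ε * b - a := by
  simp [diffEval, Plin]

lemma diffDeriv_Plin_zero (ε a : K) :
    diffDeriv (Finsupp.single 0 1) (Plin ε a) = - C ε := by
  simp [diffDeriv, Plin, List.ofFn_succ, pow_succ]

lemma diffDeriv_Plin_one (ε a : K) :
    diffDeriv (Finsupp.single 1 1) (Plin ε a) = 1 := by
  simp [diffDeriv, Plin, List.ofFn_succ]

lemma diffDeriv_Plin_vanish (ε a : K) (J : Fin 2 →₀ ℕ) (h : 2 ≤ J 0 + J 1) :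
    diffDeriv J (Plin ε a) = 0 := by
  set f0 := (pderiv (R := K) (0 : Fin 2)).toLinearMap with hf0
  set f1 := (pderiv (R := K) (1 : Fin 2)).toLinearMap with hf1
  have key : (f0 ^ (J 0)) ((f1 ^ (J 1)) (Plin ε a)) = 0 := by
    have e0 : f0 (Plin ε a) = - C ε := by simp [hf0, Plin]
    have e1 : f1 (Plin ε a) = 1 := by simp [hf1, Plin]
    match h1 : J 1, h0 : J 0 with
    | 0, 0 => omega
    | 0, 1 => omega
    | 1, 0 => omega
    | 0, (m+2) =>
      simp only [pow_zero, Module.End.one_apply, pow_succ, Module.End.mul_apply, e0]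
      simp [hf0]
    | 1, (m+1) =>
      simp only [pow_one, e1, pow_succ, Module.End.mul_apply]
      simp [hf0]
    | (l+2), _ =>
      simp only [pow_succ, Module.End.mul_apply, e1]
      simp [hf1, e1]
  rw [hf0, hf1] at key
  simp [diffDeriv, List.ofFn_succ, key]

lemma idxVal_single {Γ₀ : Type*} [LinearOrderedCommGroupWithZero Γ₀]
    (sΓ : Γ₀ →*₀ Γ₀) (i : Fin 2) (γ : Γ₀) :
    idxVal sΓ (Finsupp.single i 1) γ = (sΓ : Γ₀ → Γ₀)^[(i : ℕ)] γ := by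
  simp [idxVal, Finsupp.prod_single_index]

lemma aux_solve {K Γ₀ : Type*} [Field K] [CharZero K]
    [LinearOrderedCommGroupWithZero Γ₀]
    (v : Valuation K Γ₀) (σ : K →+* K) (sΓ : Γ₀ →*₀ Γ₀)
    (hmono : StrictMono sΓ) (hcomp : ∀ x : K, v (σ x) = sΓ (v x))
    (hΓsurj : ∀ b : K, b ≠ 0 → ∃ a : K, a ≠ 0 ∧ v (σ a) = v b)
    (hweak : WeaklySigmaHenselian v σ sΓ)
    (a ε : K) (hε : ε ≠ 0) (hvε : v ε < 1)
    (a₀ : K) (ha₀ : v a₀ ≤ 1) (hq : v (σ a₀ - ε * a₀ - a) < 1) :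
    ∃ b : K, v b ≤ 1 ∧ σ b - ε * b - a = 0 := by
  set q : K := σ a₀ - ε * a₀ - a with hqdef
  by_cases hq0 : q = 0
  · exact ⟨a₀, ha₀, hq0⟩
  set δ : Γ₀ := v q with hδdef
  have hδ0 : δ ≠ 0 := by simpa [hδdef] using hq0
  have hδ1 : δ < 1 := hq
  have hvε0 : v ε ≠ 0 := by simpa using hε
  have hsΓone : sΓ 1 = 1 := map_one sΓ
  have hsΓne : ∀ x : Γ₀, x ≠ 0 → sΓ x ≠ 0 := by
    intro x hx
    have : sΓ 0 < sΓ x := hmono (zero_lt_iff.mpr hx)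
    rw [map_zero] at this
    exact (zero_lt_iff.mp this)
  have hiter : ∀ (i : ℕ) (x : Γ₀), x ≠ 0 → (sΓ : Γ₀ → Γ₀)^[i] x ≠ 0 := by
    intro i
    induction i with
    | zero => intro x hx; simpa using hx
    | succ n ih =>
      intro x hx
      rw [Function.iterate_succ_apply]
      exact ih _ (hsΓne x hx)
  -- choose the radius γ
  obtain ⟨γ, hγ0, hγ1, hγε, hγσ, hγeq⟩ :
      ∃ γ : Γ₀, γ ≠ 0 ∧ γ < 1 ∧ v ε * γ ≤ δ ∧ sΓ γ ≤ δ ∧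
        (v ε * γ = δ ∨ sΓ γ = δ) := by
    by_cases hc : sΓ (δ / v ε) ≤ δ
    · refine ⟨δ / v ε, div_ne_zero hδ0 hvε0, ?_, le_of_eq ?_, hc, Or.inl ?_⟩
      · have := lt_of_le_of_lt hc hδ1
        rw [← hsΓone] at this
        exact hmono.lt_iff_lt.mp this
      · rw [mul_comm, div_mul_cancel₀ _ hvε0]
      · rw [mul_comm, div_mul_cancel₀ _ hvε0]
    · obtain ⟨c, hc0, hvc⟩ := hΓsurj q hq0
      have hsc : sΓ (v c) = δ := by rw [← hcomp]; exact hvc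
      have hvc0 : v c ≠ 0 := by simpa using hc0
      refine ⟨v c, hvc0, ?_, ?_, le_of_eq hsc, Or.inr hsc⟩
      · have : sΓ (v c) < sΓ 1 := by rw [hsΓone, hsc]; exact hδ1
        exact hmono.lt_iff_lt.mp this
      · push_neg at hc
        have hlt : v c < δ / v ε := by
          apply hmono.lt_iff_lt.mp
          rw [hsc]; exact hc
        have := (lt_div_iff₀ (zero_lt_iff.mpr hvε0)).mp hlt
        rw [mul_comm] at this
        exact le_of_lt this
  -- evaluation of first derivatives
  have he0 : v (diffEval σ (diffDeriv (Finsupp.single (0 : Fin 2) 1) (Plin ε a)) a₀)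
      = v ε := by
    rw [diffDeriv_Plin_zero]
    simp [diffEval]
  have he1 : v (diffEval σ (diffDeriv (Finsupp.single (1 : Fin 2) 1) (Plin ε a)) a₀)
      = 1 := by
    rw [diffDeriv_Plin_one]
    simp [diffEval]
  have hqeval : v (diffEval σ (Plin ε a) a₀) = δ := by
    rw [diffEval_Plin]
  -- the σ-henselian configuration
  have hconfig : InSigmaHenselianConfig v σ sΓ (Plin ε a) a₀ γ := by
    refine ⟨hγ0, ?_, ?_, ?_⟩
    · rcases hγeq with h | h
      · exact ⟨0, by rw [hqeval, he0]; simpa using h.symm⟩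
      · exact ⟨1, by rw [hqeval, he1, one_mul]; simpa using h.symm⟩
    · intro j
      match j with
      | 0 => rw [hqeval, he0]; simpa using hγε
      | 1 => rw [hqeval, he1, one_mul]; simpa using hγσ
    · intro J L hJ hL hne
      have hJ1 : J 0 + J 1 ≠ 0 := by
        intro h
        apply hJ
        ext i
        fin_cases i <;> simp <;> omega
      have hL1 : L 0 + L 1 ≠ 0 := by
        intro h
        apply hL
        ext i
        fin_cases i <;> simp <;> omega
      have hJLsum : 2 ≤ (J + L) 0 + (J + L) 1 := by
        simp only [Finsupp.add_apply]
        omega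
      rw [diffDeriv_Plin_vanish ε a (J + L) hJLsum]
      have hz : diffEval σ (0 : MvPolynomial (Fin 2) K) a₀ = 0 := by
        simp [diffEval]
      rw [hz, map_zero, zero_mul, zero_lt_iff]
      apply mul_ne_zero
      · -- J has total degree 1
        have hJlt : J 0 + J 1 < 2 := by
          by_contra h
          exact hne (diffDeriv_Plin_vanish ε a J (by omega))
        have hJsum : J 0 + J 1 = 1 := by omega
        rcases Nat.eq_zero_or_pos (J 0) with h0 | h0
        · have hJeq : J = Finsupp.single 1 1 := by
            ext i
            fin_cases i <;> simp <;> omega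
          rw [hJeq, he1]
          exact one_ne_zero
        · have hJeq : J = Finsupp.single 0 1 := by
            ext i
            fin_cases i <;> simp <;> omega
          rw [hJeq, he0]
          exact hvε0
      · rw [idxVal]
        rw [Finsupp.prod_ne_zero_iff]
        intro i _
        exact pow_ne_zero _ (hiter _ _ hγ0)
  -- p' ≠ 0
  have hP' : MvPolynomial.pderiv (0 : Fin 2) (Plin ε a) ≠ 0 := by
    have : MvPolynomial.pderiv (0 : Fin 2) (Plin ε a) = - C ε := by
      simp [Plin]
    rw [this, neg_ne_zero]
    simpa using hε
  obtain ⟨b, hb0, hbv⟩ := hweak 1 (Plin ε a) a₀ γ hP' hconfig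
  rw [diffEval_Plin] at hb0
  refine ⟨b, ?_, hb0⟩
  have : v b ≤ max (v (b - a₀)) (v a₀) := by
    have h := v.map_add (b - a₀) a₀
    rwa [sub_add_cancel] at h
  refine le_trans this (max_le ?_ ha₀)
  rw [hbv]
  exact le_of_lt hγ1

end AuxLinear

theorem weaklySigmaHenselian_solves_linear
    {K Γ₀ : Type*} [Field K] [CharZero K] [LinearOrderedCommGroupWithZero Γ₀]
    (v : Valuation K Γ₀) (σ : K →+* K) (sΓ : Γ₀ →*₀ Γ₀)
    (hmono : StrictMono sΓ) (hcomp : ∀ x : K, v (σ x) = sΓ (v x))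
    (hres0 : ResidueCharZero v)
    -- σ_res surjective
    (hressurj : ∀ y : K, v y = 1 → ∃ x : K, v (σ x - y) < 1)
    -- σ_Γ surjective onto the value group
    (hΓsurj : ∀ b : K, b ≠ 0 → ∃ a : K, a ≠ 0 ∧ v (σ a) = v b)
    (hweak : WeaklySigmaHenselian v σ sΓ) :
    ∀ a : K, v a ≤ 1 → ∀ ε : K, ε ≠ 0 → v ε < 1 →
      ∃ b : K, v b ≤ 1 ∧ σ b - ε * b - a = 0 := by
  intro a ha ε hε hvε
  by_cases hva : v a < 1
  · refine aux_solve v σ sΓ hmono hcomp hΓsurj hweak a ε hε hvε 0 (by simp) ?_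
    simpa using hva
  · have hva1 : v a = 1 := le_antisymm ha (not_lt.mp hva)
    obtain ⟨x, hx⟩ := hressurj a hva1
    have hσx : v (σ x) = 1 := by
      have h := Valuation.map_add_eq_of_lt_right v
        (show v (σ x - a) < v a by rw [hva1]; exact hx)
      rw [sub_add_cancel, hva1] at h
      exact h
    have hvx : v x = 1 := by
      apply hmono.injective
      rw [map_one, ← hcomp]
      exact hσx
    apply aux_solve v σ sΓ hmono hcomp hΓsurj hweak a ε hε hvε x (le_of_eq hvx)
    have hrw : σ x - ε * x - a = (σ x - a) - ε * x := by ring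
    rw [hrw]
    refine lt_of_le_of_lt (v.map_sub _ _) (max_lt hx ?_)
    rw [v.map_mul, hvx, mul_one]
    exact hvε
end

section
/- Let K be a weakly σ-henselian valued difference field of residue characteristic zero satisfying FE, let E ⊆ K be a valued difference subfield, and suppose a, b are elements of extensions of E (with v(a) = v(b) = γ, a and b in the inversive cores of their ambient fields) that are both generic over E, meaning regular for every difference polynomial over E. Then for every difference polynomial p(X) = Σ_I a_I X^I over E, v(p(a)) = min_I { v(a_I) + I(γ) } = v(p(b)), and the map a ↦ b extends to a valued difference field isomorphism E⟨a⟩ → E⟨b⟩ over E. -/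
/-!
Basic notions for valued difference fields (K,v,σ), following the paper.

A difference polynomial p(X) = P(X, σ(X), …, σ^n(X)) is represented by a
multivariate polynomial `P : MvPolynomial (Fin (n+1)) K`; its evaluation at
`a` substitutes `σ^i(a)` for the i-th variable.  `diffDeriv J P` is the
Taylor coefficient p_J = (1/J!)·∂^J P (characteristic zero).  We use
Mathlib's multiplicative convention for valuations, so the additive
condition "v x > v y" of the paper becomes "v x < v y", and the additive
pairing I(γ) = Σ iₖ σ_Γ^k(γ) becomes the product `idxVal`.
-/

open scoped Classical

instance {Γ₀ : Type*} [LinearOrderedCommGroupWithZero Γ₀] : OrderBot Γ₀ :=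
  { bot := 0, bot_le := fun _ => zero_le' }

/-- `a ∈ L` is generic over `E` (embedded in `L` via `f`): it is regular for
every difference polynomial over `E`, i.e. v(p(a)) = min_I (v(a_I)+v(a^I))
(multiplicatively, the max over the support). -/
def GenericOver {E L Γ₀ : Type*} [Field E] [Field L]
    [LinearOrderedCommGroupWithZero Γ₀]
    (vE : Valuation E Γ₀) (w : Valuation L Γ₀) (τ : L →+* L) (f : E →+* L)
    (a : L) : Prop :=
  ∀ (n : ℕ) (P : MvPolynomial (Fin (n + 1)) E),
    w (diffEval τ (MvPolynomial.map f P) a) =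
      P.support.sup fun m =>
        vE (P.coeff m) * w (∏ i : Fin (n + 1), ((τ : L → L)^[(i : ℕ)] a) ^ m i)

/-!
STATEMENT 15: Let E be a valued difference field (a subfield of a model K
of hVFE, which serves as context), and let a, b be elements of the
inversive cores of extensions L₁, L₂ of E, both generic over E and with
v(a) = v(b) = γ.  Then for every difference polynomial p(X) = Σ_I a_I X^I
over E, v(p(a)) = min_I (v(a_I) + I(γ)) = v(p(b)), and a ↦ b extends to a
valued difference field isomorphism E⟨a⟩ → E⟨b⟩ over E.

E⟨a⟩ is the subfield of L₁ generated by f₁(E) together with all σ^n(a) and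
σ^{-n}(a).
-/



namespace GenAux

variable {E L Γ₀ : Type*} [Field E] [Field L] [LinearOrderedCommGroupWithZero Γ₀]

section seq
variable (τ : L →+* L) (a : L)

/-- A chosen system of σ-preimages of `a`. -/
noncomputable def seqc (hcore : ∀ n : ℕ, ∃ y : L, (τ : L → L)^[n] y = a) (m : ℕ) : L :=
  Classical.choose (hcore m)

variable (hcore : ∀ n : ℕ, ∃ y : L, (τ : L → L)^[n] y = a)

theorem seqc_spec (m : ℕ) : (τ : L → L)^[m] (seqc τ a hcore m) = a :=
  Classical.choose_spec (hcore m)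

theorem seqc_zero : seqc τ a hcore 0 = a := seqc_spec τ a hcore 0

theorem seqc_succ (m : ℕ) : τ (seqc τ a hcore (m+1)) = seqc τ a hcore m := by
  have hinj : Function.Injective (τ : L → L) := τ.injective
  apply hinj.iterate m
  rw [← Function.iterate_succ_apply, seqc_spec, seqc_spec]

theorem seqc_iter (j : ℕ) : ∀ m : ℕ, j ≤ m →
    (τ : L → L)^[j] (seqc τ a hcore m) = seqc τ a hcore (m - j) := by
  induction j with
  | zero => intro m _; simp
  | succ k ih =>
      intro m h
      obtain ⟨m', rfl⟩ : ∃ m', m = m' + 1 := ⟨m - 1, by omega⟩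
      rw [Function.iterate_succ_apply, seqc_succ, ih m' (by omega)]
      congr 1
      omega

/-- `sfun k` is `σ^k(a)` for `k : ℤ`. -/
noncomputable def sfun (k : ℤ) : L :=
  if 0 ≤ k then (τ : L → L)^[k.toNat] a else seqc τ a hcore (-k).toNat

theorem sfun_eq (i m : ℕ) : sfun τ a hcore ((i : ℤ) - m) = (τ : L → L)^[i] (seqc τ a hcore m) := by
  rcases le_or_gt (m : ℤ) i with h | h
  · have h0 : (0:ℤ) ≤ (i:ℤ) - m := by omega
    have hm : m ≤ i := by exact_mod_cast h
    rw [sfun, if_pos h0]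
    obtain ⟨d, rfl⟩ := Nat.exists_eq_add_of_le hm
    have : ((m + d : ℕ) : ℤ) - m = (d : ℤ) := by push_cast; ring
    rw [this]
    simp only [Int.toNat_natCast]
    rw [Nat.add_comm, Function.iterate_add_apply]
    rw [seqc_spec]
  · have h0 : ¬ (0:ℤ) ≤ (i:ℤ) - m := by omega
    have hi : i < m := by exact_mod_cast h
    rw [sfun, if_neg h0]
    have : (-((i:ℤ) - m)).toNat = m - i := by omega
    rw [this, seqc_iter τ a hcore i m (le_of_lt hi)]

theorem sfun_succ (k : ℤ) : τ (sfun τ a hcore k) = sfun τ a hcore (k + 1) := by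
  rcases le_or_gt 0 k with h | h
  · rw [sfun, if_pos h, sfun, if_pos (by omega)]
    have : (k+1).toNat = k.toNat + 1 := by omega
    rw [this, Function.iterate_succ_apply']
  · rcases eq_or_lt_of_le (Int.add_one_le_iff.mpr h) with h1 | h1
    · -- k = -1
      have hk : k = -1 := by omega
      subst hk
      rw [sfun, if_neg (by omega), sfun, if_pos (by omega)]
      have h2 : (-(-1:ℤ)).toNat = 1 := by decide
      have h3 : ((-1:ℤ)+1).toNat = 0 := by decide
      rw [h2, h3]
      simp only [Function.iterate_zero, id]
      have := seqc_succ τ a hcore 0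
      rw [show (0:ℕ)+1 = 1 from rfl] at this
      rw [this, seqc_zero]
    · -- k + 1 < 0
      rw [sfun, if_neg (by omega), sfun, if_neg (by omega)]
      have h2 : (-k).toNat = (-(k+1)).toNat + 1 := by omega
      rw [h2, seqc_succ]


theorem sfun_neg (n : ℕ) : sfun τ a hcore (-(n:ℤ)) = seqc τ a hcore n := by
  rcases Nat.eq_zero_or_pos n with rfl | h
  · show sfun τ a hcore 0 = _
    rw [sfun, if_pos le_rfl, seqc_zero τ a hcore]
    simp
  · rw [sfun, if_neg (by omega)]
    congr 1
    omega

end seq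

end GenAux

namespace GenAux2
open MvPolynomial

variable {E L Γ₀ : Type*} [Field E] [Field L] [LinearOrderedCommGroupWithZero Γ₀]

-- shift hom
noncomputable def shiftHom (σE : E →+* E) : MvPolynomial ℤ E →+* MvPolynomial ℤ E :=
  eval₂Hom (MvPolynomial.C.comp σE) (fun k => X (k+1))

theorem shiftHom_C (σE : E →+* E) (x : E) : shiftHom σE (C x) = C (σE x) := by
  simp [shiftHom]

theorem shiftHom_X (σE : E →+* E) (k : ℤ) : shiftHom σE (X k) = X (k+1) := by
  simp [shiftHom]

-- τ^[m] ∘ f = f ∘ σE^[m]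
theorem iter_comm (σE : E →+* E) (τ : L →+* L) (f : E →+* L)
    (hfσ : ∀ x : E, f (σE x) = τ (f x)) (m : ℕ) (x : E) :
    (τ : L → L)^[m] (f x) = f ((σE : E → E)^[m] x) := by
  induction m with
  | zero => simp
  | succ k ih => rw [Function.iterate_succ_apply', ih, Function.iterate_succ_apply', hfσ]

theorem viter (w : Valuation L Γ₀) (τ : L →+* L) (sΓ : Γ₀ →*₀ Γ₀)
    (hτ : ∀ y : L, w (τ y) = sΓ (w y)) (i : ℕ) (y : L) :
    w ((τ : L → L)^[i] y) = (sΓ : Γ₀ → Γ₀)^[i] (w y) := by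
  induction i with
  | zero => simp
  | succ k ih => rw [Function.iterate_succ_apply', Function.iterate_succ_apply', hτ, ih]

theorem idx_prod (w : Valuation L Γ₀) (τ : L →+* L) (sΓ : Γ₀ →*₀ Γ₀)
    (hτ : ∀ y : L, w (τ y) = sΓ (w y)) {n : ℕ} (J : Fin (n+1) →₀ ℕ) (x : L) (γ : Γ₀)
    (hx : w x = γ) :
    w (∏ i : Fin (n + 1), ((τ : L → L)^[(i : ℕ)] x) ^ J i) = idxVal sΓ J γ := by
  rw [map_prod]
  rw [idxVal, Finsupp.prod_fintype]
  · congr 1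
    funext i
    rw [map_pow, viter w τ sΓ hτ, hx]
  · intro i; simp

/-- Restatement of genericity. -/
theorem generic_val (vE : Valuation E Γ₀) (w : Valuation L Γ₀) (τ : L →+* L) (sΓ : Γ₀ →*₀ Γ₀)
    (f : E →+* L) (a : L) (γ : Γ₀)
    (hτ : ∀ y : L, w (τ y) = sΓ (w y)) (hva : w a = γ)
    (hgen : GenericOver vE w τ f a) (n : ℕ) (P : MvPolynomial (Fin (n+1)) E) :
    w (diffEval τ (MvPolynomial.map f P) a) =
      P.support.sup fun J => vE (P.coeff J) * idxVal sΓ J γ := by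
  rw [hgen n P]
  congr 1
  funext J
  rw [idx_prod w τ sΓ hτ J a γ hva]

end GenAux2

namespace GenAux3
open MvPolynomial GenAux GenAux2

variable {E L Γ₀ : Type*} [Field E] [Field L] [LinearOrderedCommGroupWithZero Γ₀]

/-- Evaluation of ℤ-indexed difference polynomials at `a`. -/
noncomputable def Phi (τ : L →+* L) (f : E →+* L) (a : L)
    (hcore : ∀ n : ℕ, ∃ y : L, (τ : L → L)^[n] y = a) : MvPolynomial ℤ E →+* L :=
  eval₂Hom f (sfun τ a hcore)

theorem Phi_C (τ : L →+* L) (f : E →+* L) (a : L) (hcore) (x : E) :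
    Phi τ f a hcore (C x) = f x := by simp [Phi]

theorem Phi_X (τ : L →+* L) (f : E →+* L) (a : L) (hcore) (k : ℤ) :
    Phi τ f a hcore (X k) = sfun τ a hcore k := by simp [Phi]

theorem Phi_comm_shift (σE : E →+* E) (τ : L →+* L) (f : E →+* L) (a : L) (hcore)
    (hfσ : ∀ x : E, f (σE x) = τ (f x)) (r : MvPolynomial ℤ E) :
    τ (Phi τ f a hcore r) = Phi τ f a hcore (shiftHom σE r) := by
  have : τ.comp (Phi τ f a hcore) = (Phi τ f a hcore).comp (shiftHom σE) := by
    apply MvPolynomial.ringHom_ext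
    · intro x
      simp only [RingHom.comp_apply, Phi_C, shiftHom_C, hfσ]
    · intro k
      simp only [RingHom.comp_apply, Phi_X, shiftHom_X, sfun_succ]
  exact DFunLike.congr_fun this r

theorem window (r : MvPolynomial ℤ E) :
    ∃ (m n : ℕ) (P : MvPolynomial (Fin (n+1)) E),
      r = rename (fun i : Fin (n+1) => (i : ℤ) - m) P := by
  obtain ⟨n0, f0, _, q, rfl⟩ := exists_fin_rename r
  set m : ℕ := Finset.univ.sup (fun j : Fin n0 => (f0 j).natAbs) with hm
  have hb : ∀ j, (f0 j).natAbs ≤ m := fun j =>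
    Finset.le_sup (f := fun j : Fin n0 => (f0 j).natAbs) (Finset.mem_univ j)
  have hgb : ∀ j : Fin n0, (f0 j + m).toNat < 2*m+1 := by
    intro j; have := hb j; omega
  refine ⟨m, 2*m, rename (fun j => ⟨(f0 j + m).toNat, hgb j⟩) q, ?_⟩
  rw [rename_rename]
  have hfun : ((fun i : Fin (2*m+1) => (i:ℤ) - m) ∘
      fun j => (⟨(f0 j + m).toNat, hgb j⟩ : Fin (2*m+1))) = f0 := by
    funext j
    show ((((f0 j + m).toNat : ℕ) : ℤ)) - m = f0 j
    have := hb j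
    omega
  rw [hfun]

variable (vE : Valuation E Γ₀) (σE : E →+* E) (sΓ : Γ₀ →*₀ Γ₀)
  (w : Valuation L Γ₀) (τ : L →+* L) (f : E →+* L) (a : L) (γ : Γ₀)

theorem sideval
    (hτ : ∀ y : L, w (τ y) = sΓ (w y)) (hva : w a = γ)
    (hfσ : ∀ x : E, f (σE x) = τ (f x))
    (hgen : GenericOver vE w τ f a)
    (hcore : ∀ n : ℕ, ∃ y : L, (τ : L → L)^[n] y = a)
    (m n : ℕ) (P : MvPolynomial (Fin (n+1)) E) :
    (sΓ : Γ₀ → Γ₀)^[m]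
        (w (Phi τ f a hcore (rename (fun i : Fin (n+1) => (i : ℤ) - m) P))) =
      ((MvPolynomial.map (σE^m) P).support.sup fun J =>
        vE ((MvPolynomial.map (σE^m) P).coeff J) * idxVal sΓ J γ) := by
  rw [← viter w τ sΓ hτ m]
  have h1 : Phi τ f a hcore (rename (fun i : Fin (n+1) => (i : ℤ) - m) P)
      = eval₂ f (fun i : Fin (n+1) => (τ : L → L)^[(i:ℕ)] (seqc τ a hcore m)) P := by
    rw [Phi, coe_eval₂Hom, eval₂_rename]
    congr 1
    funext i
    exact sfun_eq τ a hcore i m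
  rw [h1]
  have h2 : (τ : L → L)^[m] = ⇑(τ^m) := (RingHom.coe_pow τ m).symm
  rw [h2, eval₂_comp_left (τ^m) f _ P]
  have h3 : (τ^m).comp f = f.comp (σE^m) := by
    ext x
    simp only [RingHom.comp_apply, RingHom.coe_pow]
    exact iter_comm σE τ f hfσ m x
  have h4 : (⇑(τ^m) ∘ fun i : Fin (n+1) => (τ : L → L)^[(i:ℕ)] (seqc τ a hcore m))
      = fun i : Fin (n+1) => (τ : L → L)^[(i:ℕ)] a := by
    funext i
    show (⇑(τ^m)) ((τ : L → L)^[(i:ℕ)] (seqc τ a hcore m)) = _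
    rw [RingHom.coe_pow, ← Function.iterate_add_apply, Nat.add_comm,
      Function.iterate_add_apply, seqc_spec]
  rw [h3, h4, ← eval₂_map, ← eval_map]
  have h5 : MvPolynomial.eval (fun i : Fin (n+1) => (τ : L → L)^[(i:ℕ)] a)
        (MvPolynomial.map f (MvPolynomial.map (σE^m) P))
      = diffEval τ (MvPolynomial.map f (MvPolynomial.map (σE^m) P)) a := rfl
  rw [h5, generic_val vE w τ sΓ f a γ hτ hva hgen n (MvPolynomial.map (σE^m) P)]

theorem sup_ne_zero (hmono : StrictMono sΓ) (hγ : γ ≠ 0) {n : ℕ}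
    (Q : MvPolynomial (Fin (n+1)) E) (hQ : Q ≠ 0) :
    (Q.support.sup fun J => vE (Q.coeff J) * idxVal sΓ J γ) ≠ 0 := by
  obtain ⟨J, hJ⟩ := (MvPolynomial.support_nonempty.mpr hQ)
  have hterm : vE (Q.coeff J) * idxVal sΓ J γ ≠ 0 := by
    apply mul_ne_zero
    · exact (Valuation.ne_zero_iff vE).mpr (MvPolynomial.mem_support_iff.mp hJ)
    · rw [idxVal]
      rw [Finsupp.prod]
      rw [Finset.prod_ne_zero_iff]
      intro i _
      apply pow_ne_zero
      intro h0
      have hfix : (sΓ : Γ₀ → Γ₀)^[(i:ℕ)] 0 = 0 := Function.iterate_fixed (map_zero sΓ) _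
      exact hγ ((hmono.injective.iterate (i:ℕ)) (h0.trans hfix.symm))
  intro h0
  have := Finset.le_sup (f := fun J => vE (Q.coeff J) * idxVal sΓ J γ) hJ
  rw [h0] at this
  exact hterm (le_zero_iff.mp this)

end GenAux3

namespace GenAux4
open MvPolynomial GenAux GenAux2 GenAux3

theorem keyval {E Γ₀ L₁ L₂ : Type*} [Field E] [Field L₁] [Field L₂]
    [LinearOrderedCommGroupWithZero Γ₀]
    (vE : Valuation E Γ₀) (σE : E →+* E) (sΓ : Γ₀ →*₀ Γ₀)
    (hmono : StrictMono sΓ) (γ : Γ₀) (hγ : γ ≠ 0)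
    (w₁ : Valuation L₁ Γ₀) (τ₁ : L₁ →+* L₁) (f₁ : E →+* L₁) (a : L₁)
    (hτ₁ : ∀ y, w₁ (τ₁ y) = sΓ (w₁ y)) (hva : w₁ a = γ)
    (hf₁σ : ∀ x, f₁ (σE x) = τ₁ (f₁ x)) (hgen_a : GenericOver vE w₁ τ₁ f₁ a)
    (hcore_a : ∀ n : ℕ, ∃ y, (τ₁ : L₁ → L₁)^[n] y = a)
    (w₂ : Valuation L₂ Γ₀) (τ₂ : L₂ →+* L₂) (f₂ : E →+* L₂) (b : L₂)
    (hτ₂ : ∀ y, w₂ (τ₂ y) = sΓ (w₂ y)) (hvb : w₂ b = γ)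
    (hf₂σ : ∀ x, f₂ (σE x) = τ₂ (f₂ x)) (hgen_b : GenericOver vE w₂ τ₂ f₂ b)
    (hcore_b : ∀ n : ℕ, ∃ y, (τ₂ : L₂ → L₂)^[n] y = b) :
    ∀ r : MvPolynomial ℤ E,
      w₁ (Phi τ₁ f₁ a hcore_a r) = w₂ (Phi τ₂ f₂ b hcore_b r) ∧
      (r ≠ 0 → Phi τ₁ f₁ a hcore_a r ≠ 0) := by
  intro r
  obtain ⟨m, n, P, rfl⟩ := window r
  have h1 := sideval vE σE sΓ w₁ τ₁ f₁ a γ hτ₁ hva hf₁σ hgen_a hcore_a m n P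
  have h2 := sideval vE σE sΓ w₂ τ₂ f₂ b γ hτ₂ hvb hf₂σ hgen_b hcore_b m n P
  have hinj : Function.Injective ((sΓ : Γ₀ → Γ₀)^[m]) := hmono.injective.iterate m
  constructor
  · exact hinj (h1.trans h2.symm)
  · intro hr
    have hP : P ≠ 0 := by rintro rfl; simp at hr
    have hQ : MvPolynomial.map (σE^m) P ≠ 0 := by
      intro h
      exact hP (MvPolynomial.map_injective _ (RingHom.injective _)
        (by rw [h, map_zero]))
    have hs := sup_ne_zero vE sΓ γ hmono hγ _ hQ
    intro h0
    rw [h0, map_zero] at h1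
    rw [← h1] at hs
    exact hs (Function.iterate_fixed (map_zero sΓ) m)

end GenAux4



set_option maxHeartbeats 1000000 in
theorem generic_elements_isomorphic
    {E L₁ L₂ Γ₀ : Type*} [Field E] [CharZero E] [Field L₁] [CharZero L₁]
    [Field L₂] [CharZero L₂] [LinearOrderedCommGroupWithZero Γ₀]
    (vE : Valuation E Γ₀) (σE : E →+* E) (sΓ : Γ₀ →*₀ Γ₀)
    (hmono : StrictMono sΓ) (hcompE : ∀ x : E, vE (σE x) = sΓ (vE x))
    (hres0 : ResidueCharZero vE)
    -- the two extensions of E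
    (w₁ : Valuation L₁ Γ₀) (τ₁ : L₁ →+* L₁) (f₁ : E →+* L₁)
    (w₂ : Valuation L₂ Γ₀) (τ₂ : L₂ →+* L₂) (f₂ : E →+* L₂)
    (hf₁v : ∀ x : E, w₁ (f₁ x) = vE x) (hf₁σ : ∀ x : E, f₁ (σE x) = τ₁ (f₁ x))
    (hτ₁ : ∀ y : L₁, w₁ (τ₁ y) = sΓ (w₁ y))
    (hf₂v : ∀ x : E, w₂ (f₂ x) = vE x) (hf₂σ : ∀ x : E, f₂ (σE x) = τ₂ (f₂ x))
    (hτ₂ : ∀ y : L₂, w₂ (τ₂ y) = sΓ (w₂ y))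
    -- a and b, generic over E, in the inversive cores, of value γ
    (a : L₁) (b : L₂) (γ : Γ₀) (hγ : γ ≠ 0)
    (hva : w₁ a = γ) (hvb : w₂ b = γ)
    (hcore_a : ∀ n : ℕ, ∃ y : L₁, (τ₁ : L₁ → L₁)^[n] y = a)
    (hcore_b : ∀ n : ℕ, ∃ y : L₂, (τ₂ : L₂ → L₂)^[n] y = b)
    (hgen_a : GenericOver vE w₁ τ₁ f₁ a)
    (hgen_b : GenericOver vE w₂ τ₂ f₂ b)
    -- E⟨a⟩ and E⟨b⟩
    (Ea : Subfield L₁)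
    (hEa : Ea = Subfield.closure {x : L₁ | x ∈ Set.range f₁ ∨
      (∃ n : ℕ, (τ₁ : L₁ → L₁)^[n] x = a) ∨ (∃ n : ℕ, x = (τ₁ : L₁ → L₁)^[n] a)})
    (Eb : Subfield L₂)
    (hEb : Eb = Subfield.closure {x : L₂ | x ∈ Set.range f₂ ∨
      (∃ n : ℕ, (τ₂ : L₂ → L₂)^[n] x = b) ∨ (∃ n : ℕ, x = (τ₂ : L₂ → L₂)^[n] b)}) :
    -- (1) the common value of v(p(a)) and v(p(b))
    (∀ (n : ℕ) (P : MvPolynomial (Fin (n + 1)) E),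
       w₁ (diffEval τ₁ (MvPolynomial.map f₁ P) a) =
         (P.support.sup fun m => vE (P.coeff m) * idxVal sΓ m γ) ∧
       w₂ (diffEval τ₂ (MvPolynomial.map f₂ P) b) =
         (P.support.sup fun m => vE (P.coeff m) * idxVal sΓ m γ)) ∧
    -- (2) a ↦ b induces a valued difference field isomorphism E⟨a⟩ → E⟨b⟩ over E
    (∃ g : Ea ≃+* Eb,
      (∀ x : E, (g ⟨f₁ x, by
          rw [hEa]; exact Subfield.subset_closure (Or.inl ⟨x, rfl⟩)⟩ : L₂) = f₂ x) ∧
      ((g ⟨a, by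
          rw [hEa]; exact Subfield.subset_closure (Or.inr (Or.inl ⟨0, rfl⟩))⟩ : L₂) = b) ∧
      (∀ z : Ea, w₂ (g z : L₂) = w₁ (z : L₁)) ∧
      (∀ z : Ea, ∀ hz : τ₁ (z : L₁) ∈ Ea,
        ((g ⟨τ₁ (z : L₁), hz⟩ : L₂)) = τ₂ (g z : L₂))) := by
  classical
  have keyv := GenAux4.keyval vE σE sΓ hmono γ hγ w₁ τ₁ f₁ a hτ₁ hva hf₁σ hgen_a hcore_a
    w₂ τ₂ f₂ b hτ₂ hvb hf₂σ hgen_b hcore_b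
  constructor
  · -- part (1)
    intro n P
    exact ⟨GenAux2.generic_val vE w₁ τ₁ sΓ f₁ a γ hτ₁ hva hgen_a n P,
      GenAux2.generic_val vE w₂ τ₂ sΓ f₂ b γ hτ₂ hvb hgen_b n P⟩
  -- part (2)
  set Φ₁ := GenAux3.Phi τ₁ f₁ a hcore_a with hΦ₁def
  set Φ₂ := GenAux3.Phi τ₂ f₂ b hcore_b with hΦ₂def
  have hne₁ : ∀ r : MvPolynomial ℤ E, r ≠ 0 → Φ₁ r ≠ 0 := fun r hr => (keyv r).2 hr
  have hne₂ : ∀ r : MvPolynomial ℤ E, r ≠ 0 → Φ₂ r ≠ 0 := by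
    intro r hr h0
    have h := (keyv r).1
    rw [h0, map_zero] at h
    exact hne₁ r hr ((Valuation.zero_iff w₁).mp h)
  have hΦ₁inj : Function.Injective Φ₁ := by
    intro p q h
    by_contra hneq
    exact hne₁ (p - q) (sub_ne_zero.mpr hneq) (by rw [map_sub, h, sub_self])
  have hΦ₂inj : Function.Injective Φ₂ := by
    intro p q h
    by_contra hneq
    exact hne₂ (p - q) (sub_ne_zero.mpr hneq) (by rw [map_sub, h, sub_self])
  have hshift₁ : ∀ r : MvPolynomial ℤ E, τ₁ (Φ₁ r) = Φ₁ (GenAux2.shiftHom σE r) :=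
    fun r => GenAux3.Phi_comm_shift σE τ₁ f₁ a hcore_a hf₁σ r
  have hshift₂ : ∀ r : MvPolynomial ℤ E, τ₂ (Φ₂ r) = Φ₂ (GenAux2.shiftHom σE r) :=
    fun r => GenAux3.Phi_comm_shift σE τ₂ f₂ b hcore_b hf₂σ r
  let F : Type _ := FractionRing (MvPolynomial ℤ E)
  let Φh₁ : F →+* L₁ := IsFractionRing.lift hΦ₁inj
  let Φh₂ : F →+* L₂ := IsFractionRing.lift hΦ₂inj
  have hlift₁ : ∀ r : MvPolynomial ℤ E, Φh₁ (algebraMap (MvPolynomial ℤ E) F r) = Φ₁ r :=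
    fun r => IsFractionRing.lift_algebraMap hΦ₁inj r
  have hlift₂ : ∀ r : MvPolynomial ℤ E, Φh₂ (algebraMap (MvPolynomial ℤ E) F r) = Φ₂ r :=
    fun r => IsFractionRing.lift_algebraMap hΦ₂inj r
  have hdiv₁ : ∀ u v : F, Φh₁ (u / v) = Φh₁ u / Φh₁ v := fun u v => map_div₀ Φh₁ u v
  have hdiv₂ : ∀ u v : F, Φh₂ (u / v) = Φh₂ u / Φh₂ v := fun u v => map_div₀ Φh₂ u v
  have hdivsur : ∀ u : F, ∃ p q : MvPolynomial ℤ E, q ≠ 0 ∧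
      algebraMap (MvPolynomial ℤ E) F p / algebraMap (MvPolynomial ℤ E) F q = u := by
    intro u
    obtain ⟨p, q, hq, h⟩ := IsFractionRing.div_surjective (A := MvPolynomial ℤ E) u
    exact ⟨p, q, mem_nonZeroDivisors_iff_ne_zero.mp hq, h⟩
  -- membership of Φ₁'s image in Ea
  have hsmem : ∀ k : ℤ, GenAux.sfun τ₁ a hcore_a k ∈ Ea := by
    intro k
    rcases le_or_gt 0 k with h | h
    · rw [GenAux.sfun, if_pos h, hEa]
      exact Subfield.subset_closure (Or.inr (Or.inr ⟨k.toNat, rfl⟩))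
    · rw [GenAux.sfun, if_neg (not_le.mpr h), hEa]
      exact Subfield.subset_closure
        (Or.inr (Or.inl ⟨(-k).toNat, GenAux.seqc_spec τ₁ a hcore_a (-k).toNat⟩))
  have hΦ₁mem : ∀ r : MvPolynomial ℤ E, Φ₁ r ∈ Ea := by
    intro r
    induction r using MvPolynomial.induction_on with
    | C x =>
        rw [hΦ₁def, GenAux3.Phi_C, hEa]
        exact Subfield.subset_closure (Or.inl ⟨x, rfl⟩)
    | add p q hp hq => rw [map_add]; exact Ea.add_mem hp hq
    | mul_X p k hp =>
        rw [map_mul, hΦ₁def, GenAux3.Phi_X]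
        exact Ea.mul_mem hp (hsmem k)
  have hsmem₂ : ∀ k : ℤ, GenAux.sfun τ₂ b hcore_b k ∈ Eb := by
    intro k
    rcases le_or_gt 0 k with h | h
    · rw [GenAux.sfun, if_pos h, hEb]
      exact Subfield.subset_closure (Or.inr (Or.inr ⟨k.toNat, rfl⟩))
    · rw [GenAux.sfun, if_neg (not_le.mpr h), hEb]
      exact Subfield.subset_closure
        (Or.inr (Or.inl ⟨(-k).toNat, GenAux.seqc_spec τ₂ b hcore_b (-k).toNat⟩))
  have hΦ₂mem : ∀ r : MvPolynomial ℤ E, Φ₂ r ∈ Eb := by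
    intro r
    induction r using MvPolynomial.induction_on with
    | C x =>
        rw [hΦ₂def, GenAux3.Phi_C, hEb]
        exact Subfield.subset_closure (Or.inl ⟨x, rfl⟩)
    | add p q hp hq => rw [map_add]; exact Eb.add_mem hp hq
    | mul_X p k hp =>
        rw [map_mul, hΦ₂def, GenAux3.Phi_X]
        exact Eb.mul_mem hp (hsmem₂ k)
  have hΦh₁mem : ∀ u : F, Φh₁ u ∈ Ea := by
    intro u
    obtain ⟨p, q, hq, rfl⟩ := hdivsur u
    rw [hdiv₁, hlift₁, hlift₁]
    exact Ea.div_mem (hΦ₁mem p) (hΦ₁mem q)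
  have hΦh₂mem : ∀ u : F, Φh₂ u ∈ Eb := by
    intro u
    obtain ⟨p, q, hq, rfl⟩ := hdivsur u
    rw [hdiv₂, hlift₂, hlift₂]
    exact Eb.div_mem (hΦ₂mem p) (hΦ₂mem q)
  -- surjectivity onto Ea, Eb
  have hXmem₁ : ∀ k : ℤ, ∃ u : F, Φh₁ u = GenAux.sfun τ₁ a hcore_a k := by
    intro k
    exact ⟨algebraMap (MvPolynomial ℤ E) F (MvPolynomial.X k), by
      rw [hlift₁]
      exact GenAux3.Phi_X τ₁ f₁ a hcore_a k⟩
  have hEa_le : ∀ x ∈ Ea, ∃ u : F, Φh₁ u = x := by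
    intro x hx
    have : Ea ≤ Φh₁.fieldRange := by
      rw [hEa, Subfield.closure_le]
      rintro x (⟨y, rfl⟩ | ⟨n, hn⟩ | ⟨n, rfl⟩)
      · exact ⟨algebraMap (MvPolynomial ℤ E) F (MvPolynomial.C y), by
          rw [hlift₁]
          exact GenAux3.Phi_C τ₁ f₁ a hcore_a y⟩
      · have hx : x = GenAux.seqc τ₁ a hcore_a n := by
          apply (τ₁.injective.iterate n)
          rw [hn, GenAux.seqc_spec]
        rw [hx, ← GenAux.sfun_neg τ₁ a hcore_a n]
        exact hXmem₁ _
      · have h2 : (τ₁ : L₁ → L₁)^[n] a = GenAux.sfun τ₁ a hcore_a (n : ℤ) := by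
          rw [GenAux.sfun, if_pos (by positivity), Int.toNat_natCast]
        rw [h2]
        exact hXmem₁ _
    exact this hx
  have hXmem₂ : ∀ k : ℤ, ∃ u : F, Φh₂ u = GenAux.sfun τ₂ b hcore_b k := by
    intro k
    exact ⟨algebraMap (MvPolynomial ℤ E) F (MvPolynomial.X k), by
      rw [hlift₂]
      exact GenAux3.Phi_X τ₂ f₂ b hcore_b k⟩
  have hEb_le : ∀ x ∈ Eb, ∃ u : F, Φh₂ u = x := by
    intro x hx
    have : Eb ≤ Φh₂.fieldRange := by
      rw [hEb, Subfield.closure_le]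
      rintro x (⟨y, rfl⟩ | ⟨n, hn⟩ | ⟨n, rfl⟩)
      · exact ⟨algebraMap (MvPolynomial ℤ E) F (MvPolynomial.C y), by
          rw [hlift₂]
          exact GenAux3.Phi_C τ₂ f₂ b hcore_b y⟩
      · have hx : x = GenAux.seqc τ₂ b hcore_b n := by
          apply (τ₂.injective.iterate n)
          rw [hn, GenAux.seqc_spec]
        rw [hx, ← GenAux.sfun_neg τ₂ b hcore_b n]
        exact hXmem₂ _
      · have h2 : (τ₂ : L₂ → L₂)^[n] b = GenAux.sfun τ₂ b hcore_b (n : ℤ) := by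
          rw [GenAux.sfun, if_pos (by positivity), Int.toNat_natCast]
        rw [h2]
        exact hXmem₂ _
    exact this hx
  -- the equivalences
  have hbij₁ : Function.Bijective (Φh₁.codRestrict Ea hΦh₁mem) := by
    constructor
    · intro u v h
      exact Φh₁.injective (congrArg Subtype.val h)
    · rintro ⟨z, hz⟩
      obtain ⟨u, hu⟩ := hEa_le z hz
      exact ⟨u, Subtype.ext hu⟩
  have hbij₂ : Function.Bijective (Φh₂.codRestrict Eb hΦh₂mem) := by
    constructor
    · intro u v h
      exact Φh₂.injective (congrArg Subtype.val h)
    · rintro ⟨z, hz⟩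
      obtain ⟨u, hu⟩ := hEb_le z hz
      exact ⟨u, Subtype.ext hu⟩
  set e₁ : F ≃+* Ea := RingEquiv.ofBijective _ hbij₁ with he₁def
  set e₂ : F ≃+* Eb := RingEquiv.ofBijective _ hbij₂ with he₂def
  set g : Ea ≃+* Eb := e₁.symm.trans e₂ with hgdef
  have he₁coe : ∀ u : F, ((e₁ u : Ea) : L₁) = Φh₁ u := fun u => rfl
  have he₂coe : ∀ u : F, ((e₂ u : Eb) : L₂) = Φh₂ u := fun u => rfl
  -- main computation rule for g
  have gv : ∀ (z : Ea) (p q : MvPolynomial ℤ E), q ≠ 0 →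
      (z : L₁) = Φ₁ p / Φ₁ q → (g z : L₂) = Φ₂ p / Φ₂ q := by
    intro z p q hq hval
    set u : F := algebraMap (MvPolynomial ℤ E) F p / algebraMap (MvPolynomial ℤ E) F q
      with hudef
    have hu₁ : Φh₁ u = Φ₁ p / Φ₁ q := by rw [hudef, hdiv₁, hlift₁, hlift₁]
    have hu₂ : Φh₂ u = Φ₂ p / Φ₂ q := by rw [hudef, hdiv₂, hlift₂, hlift₂]
    have he1u : e₁ u = z := by
      apply Subtype.ext
      rw [he₁coe, hu₁, hval]
    have hgz : g z = e₂ u := by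
      rw [hgdef]
      show e₂ (e₁.symm z) = e₂ u
      rw [← he1u, RingEquiv.symm_apply_apply]
    rw [hgz, he₂coe, hu₂]
  -- representation of elements of Ea
  have rep : ∀ z : Ea, ∃ p q : MvPolynomial ℤ E, q ≠ 0 ∧ (z : L₁) = Φ₁ p / Φ₁ q := by
    intro z
    obtain ⟨u, hu⟩ := hEa_le z z.2
    obtain ⟨p, q, hq, hd⟩ := hdivsur u
    refine ⟨p, q, hq, ?_⟩
    rw [← hu, ← hd, hdiv₁, hlift₁, hlift₁]
  refine ⟨g, ?_, ?_, ?_, ?_⟩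
  · -- g (f₁ x) = f₂ x
    intro x
    have hmem : f₁ x ∈ Ea := by
      rw [hEa]; exact Subfield.subset_closure (Or.inl ⟨x, rfl⟩)
    have h1 : ((⟨f₁ x, hmem⟩ : Ea) : L₁) = Φ₁ (MvPolynomial.C x) / Φ₁ 1 := by
      rw [map_one, hΦ₁def, GenAux3.Phi_C, div_one]
    have h2 := gv ⟨f₁ x, hmem⟩ (MvPolynomial.C x) 1 one_ne_zero h1
    exact h2.trans (by rw [map_one, hΦ₂def, GenAux3.Phi_C, div_one])
  · -- g a = b
    have hmem : a ∈ Ea := by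
      rw [hEa]; exact Subfield.subset_closure (Or.inr (Or.inl ⟨0, rfl⟩))
    have h1 : ((⟨a, hmem⟩ : Ea) : L₁) = Φ₁ (MvPolynomial.X 0) / Φ₁ 1 := by
      rw [map_one, hΦ₁def, GenAux3.Phi_X, div_one]
      show a = GenAux.sfun τ₁ a hcore_a 0
      rw [GenAux.sfun, if_pos le_rfl]
      simp
    have h2 := gv ⟨a, hmem⟩ (MvPolynomial.X 0) 1 one_ne_zero h1
    refine h2.trans ?_
    rw [map_one, hΦ₂def, GenAux3.Phi_X, div_one]
    show GenAux.sfun τ₂ b hcore_b 0 = b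
    rw [GenAux.sfun, if_pos le_rfl]
    simp
  · -- valuation preserved
    intro z
    obtain ⟨p, q, hq, hval⟩ := rep z
    rw [gv z p q hq hval, hval, Valuation.map_div, Valuation.map_div,
      (keyv p).1, (keyv q).1]
  · -- σ-equivariance
    intro z hz
    obtain ⟨p, q, hq, hval⟩ := rep z
    have hshq : GenAux2.shiftHom σE q ≠ 0 := by
      intro h0
      apply hne₁ q hq
      apply τ₁.injective
      rw [hshift₁, h0, map_zero, map_zero]
    have hτval : ((⟨τ₁ (z : L₁), hz⟩ : Ea) : L₁)
        = Φ₁ (GenAux2.shiftHom σE p) / Φ₁ (GenAux2.shiftHom σE q) := by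
      show τ₁ (z : L₁) = _
      rw [hval, map_div₀, hshift₁, hshift₁]
    rw [gv _ _ _ hshq hτval, gv z p q hq hval, ← hshift₂, ← hshift₂, map_div₀]
end

section
/- Let K be a weakly σ-henselian valued difference field of residue characteristic zero satisfying FE, let A ⊆ K be a valued difference subfield, and let b ∈ K be generic over A (regular for every difference polynomial over A). If b' ∈ K satisfies rv(b') = rv(b), then b' is also generic over A. -/
/-!
Basic notions for valued difference fields (K,v,σ), following the paper.

A difference polynomial p(X) = P(X, σ(X), …, σ^n(X)) is represented by a
multivariate polynomial `P : MvPolynomial (Fin (n+1)) K`; its evaluation at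
`a` substitutes `σ^i(a)` for the i-th variable.  `diffDeriv J P` is the
Taylor coefficient p_J = (1/J!)·∂^J P (characteristic zero).  We use
Mathlib's multiplicative convention for valuations, so the additive
condition "v x > v y" of the paper becomes "v x < v y", and the additive
pairing I(γ) = Σ iₖ σ_Γ^k(γ) becomes the product `idxVal`.
-/

open scoped Classical

/-- `b` is generic over the subfield `A` of `K`: it is regular for every
difference polynomial with coefficients in `A`, i.e.
v(p(b)) = min_I (v(a_I) + v(b^I)) (multiplicatively, max over support). -/
def GenericOverSet {K Γ₀ : Type*} [Field K] [LinearOrderedCommGroupWithZero Γ₀]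
    (v : Valuation K Γ₀) (σ : K →+* K) (A : Set K) (b : K) : Prop :=
  ∀ (n : ℕ) (P : MvPolynomial (Fin (n + 1)) K), (∀ m, P.coeff m ∈ A) →
    v (diffEval σ P b) =
      P.support.sup fun m =>
        v (P.coeff m) * v (∏ i : Fin (n + 1), ((σ : K → K)^[(i : ℕ)] b) ^ m i)

/-- `rv b = rv b'`: they differ by a factor in `1 + m_K`. -/
def RvEq {K Γ₀ : Type*} [Field K] [LinearOrderedCommGroupWithZero Γ₀]
    (v : Valuation K Γ₀) (a b : K) : Prop :=
  ∃ u : K, v (u - 1) < 1 ∧ b = a * u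

/-!
STATEMENT 16: Let K ⊨ hVFE₀ (weakly σ-henselian, residue characteristic
zero, FE), A ≤ K a valued difference subfield, and b ∈ K generic over A.
If rv(b') = rv(b) then b' is also generic over A.
-/


section Aux
variable {K Γ₀ : Type*} [Field K] [LinearOrderedCommGroupWithZero Γ₀]
  (v : Valuation K Γ₀)

lemma aux_near_one_val {x : K} (h : v (x - 1) < 1) : v x = 1 := by
  have := v.map_one_add_of_lt (x := x - 1) h
  simpa using this

lemma aux_near_one_mul {x y : K} (hx : v (x - 1) < 1) (hy : v (y - 1) < 1) :
    v (x * y - 1) < 1 := by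
  have hxy : x * y - 1 = x * (y - 1) + (x - 1) := by ring
  rw [hxy]
  refine lt_of_le_of_lt (v.map_add _ _) (max_lt ?_ hx)
  rw [v.map_mul, aux_near_one_val v hx, one_mul]
  exact hy

lemma aux_near_one_prod {ι : Type*} (s : Finset ι) (f : ι → K)
    (h : ∀ i ∈ s, v (f i - 1) < 1) : v (∏ i ∈ s, f i - 1) < 1 := by
  classical
  refine Finset.prod_induction f (fun x => v (x - 1) < 1)
    (fun x y hx hy => aux_near_one_mul v hx hy) (by simpa using zero_lt_one) h

lemma aux_near_one_pow {x : K} (h : v (x - 1) < 1) (k : ℕ) :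
    v (x ^ k - 1) < 1 := by
  induction k with
  | zero => simpa using zero_lt_one
  | succ n ih => rw [pow_succ]; exact aux_near_one_mul v ih h

end Aux

lemma aux_iter_mul {K : Type*} [Field K] (σ : K →+* K) (i : ℕ) (x y : K) :
    (σ : K → K)^[i] (x * y) = (σ : K → K)^[i] x * (σ : K → K)^[i] y := by
  induction i with
  | zero => simp
  | succ n ih => simp [Function.iterate_succ_apply', ih, map_mul]

lemma aux_iter_ne_zero {K : Type*} [Field K] (σ : K →+* K) (i : ℕ) {x : K}
    (hx : x ≠ 0) : (σ : K → K)^[i] x ≠ 0 := by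
  induction i with
  | zero => simpa
  | succ n ih => simp [Function.iterate_succ_apply', ih]

theorem generic_depends_only_on_rv
    {K Γ₀ : Type*} [Field K] [CharZero K] [LinearOrderedCommGroupWithZero Γ₀]
    (v : Valuation K Γ₀) (σ : K →+* K) (sΓ : Γ₀ →*₀ Γ₀)
    (hmono : StrictMono sΓ) (hcomp : ∀ x : K, v (σ x) = sΓ (v x))
    (hres0 : ResidueCharZero v)
    (hweak : WeaklySigmaHenselian v σ sΓ)
    -- FE
    (hFE : ∀ x : K, IsAlgebraic σ.fieldRange x → x ∈ σ.fieldRange)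
    -- A is a valued difference subfield of K
    (A : Subfield K) (hσA : ∀ x ∈ A, σ x ∈ A)
    (b b' : K)
    (hgen : GenericOverSet v σ (A : Set K) b)
    (hrv : RvEq v b b') :
    GenericOverSet v σ (A : Set K) b' := by

  obtain ⟨u, hu1, hbe⟩ := hrv
  by_cases hb0 : b = 0
  · have hbb : b' = b := by rw [hbe, hb0, zero_mul]
    rwa [hbb]
  have hσu : ∀ i : ℕ, v ((σ : K → K)^[i] u - 1) < 1 := by
    intro i; induction i with
    | zero => simpa using hu1
    | succ n ih =>
      rw [Function.iterate_succ_apply']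
      calc v (σ ((σ : K → K)^[n] u) - 1)
          = v (σ ((σ : K → K)^[n] u - 1)) := by rw [map_sub σ, map_one σ]
        _ = sΓ (v ((σ : K → K)^[n] u - 1)) := hcomp _
        _ < sΓ 1 := hmono ih
        _ = 1 := map_one sΓ
  intro n P hP
  set t : (Fin (n + 1) →₀ ℕ) → K :=
    fun m => ∏ i : Fin (n + 1), ((σ : K → K)^[(i : ℕ)] b) ^ m i with ht
  set w : (Fin (n + 1) →₀ ℕ) → K :=
    fun m => ∏ i : Fin (n + 1), ((σ : K → K)^[(i : ℕ)] u) ^ m i with hwdef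
  have hw1 : ∀ m, v (w m - 1) < 1 := fun m =>
    aux_near_one_prod v _ _ (fun i _ => aux_near_one_pow v (hσu i) _)
  have hwv : ∀ m, v (w m) = 1 := fun m => aux_near_one_val v (hw1 m)
  have ht' : ∀ m : Fin (n + 1) →₀ ℕ,
      (∏ i : Fin (n + 1), ((σ : K → K)^[(i : ℕ)] b') ^ m i) = t m * w m := by
    intro m
    rw [ht, hwdef, ← Finset.prod_mul_distrib]
    refine Finset.prod_congr rfl fun i _ => ?_
    rw [hbe, aux_iter_mul, mul_pow]
  have hRHS : (P.support.sup fun m =>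
        v (P.coeff m) * v (∏ i : Fin (n + 1), ((σ : K → K)^[(i : ℕ)] b') ^ m i))
      = P.support.sup fun m => v (P.coeff m) * v (t m) := by
    refine Finset.sup_congr rfl fun m _ => ?_
    rw [ht' m, v.map_mul, hwv, mul_one]
  have hEvb : diffEval σ P b = ∑ m ∈ P.support, P.coeff m * t m := by
    rw [diffEval, MvPolynomial.eval_eq']
  have hEvb' : diffEval σ P b' = ∑ m ∈ P.support, P.coeff m * (t m * w m) := by
    rw [diffEval, MvPolynomial.eval_eq']
    exact Finset.sum_congr rfl fun m _ => by rw [ht' m]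
  by_cases hs : P.support = ∅
  · have hP0 : P = 0 := MvPolynomial.support_eq_empty.mp hs
    subst hP0
    simp only [hs, Finset.sup_empty]
    show v (diffEval σ 0 b') = (0 : Γ₀)
    simp [diffEval]
  · obtain ⟨m0, hm0⟩ := Finset.nonempty_iff_ne_empty.mpr hs
    set M := P.support.sup fun m => v (P.coeff m) * v (t m) with hMdef
    have hM0 : M ≠ 0 := by
      have h1 : v (P.coeff m0) * v (t m0) ≤ M := Finset.le_sup (f := fun m => v (P.coeff m) * v (t m)) hm0
      have h2 : v (P.coeff m0) * v (t m0) ≠ 0 := by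
        apply mul_ne_zero <;> rw [v.ne_zero_iff]
        · exact MvPolynomial.mem_support_iff.mp hm0
        · exact Finset.prod_ne_zero_iff.mpr fun i _ =>
            pow_ne_zero _ (aux_iter_ne_zero σ _ hb0)
      exact fun h => h2 (le_antisymm (h ▸ h1) zero_le')
    have hvb : v (diffEval σ P b) = M := hgen n P hP
    have hdiff : v (diffEval σ P b' - diffEval σ P b) < M := by
      rw [hEvb, hEvb', ← Finset.sum_sub_distrib]
      refine v.map_sum_lt hM0 fun m hm => ?_
      have hring : P.coeff m * (t m * w m) - P.coeff m * t m
          = P.coeff m * t m * (w m - 1) := by ring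
      rw [hring, v.map_mul, v.map_mul]
      calc v (P.coeff m) * v (t m) * v (w m - 1)
          ≤ M * v (w m - 1) := mul_le_mul_left (hMdef ▸ Finset.le_sup (f := fun m => v (P.coeff m) * v (t m)) hm) _
        _ < M * 1 := mul_lt_mul_of_pos_left (hw1 m) (zero_lt_iff.mpr hM0)
        _ = M := mul_one M
    have heq : v (diffEval σ P b') = v (diffEval σ P b) :=
      v.map_eq_of_sub_lt (hvb ▸ hdiff)
    rw [hRHS, heq, hvb]
end
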